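/- Let g : ℕ₊ × ℕ₊ → ℝ (arguments written (k, c)) be describable, i.e., there exists a finite set F of good real polynomials in the two variables k, c such that for all k, c ∈ ℕ₊ there exists p ∈ F with p(k, c) = g(k, c). Then for every ε > 0 there exist k, c ∈ ℕ₊ such that |g(k, c) − c| > ε. In particular, no describable function uniformly approximates the function (k, c) ↦ c. -/

import Mathlib

open MvPolynomial

/-- A two-variable real polynomial (variable `0` = k, variable `1` = c) is *good* if
every monomial with positive degree in `c` also has positive degree in `k`. -/
def GoodPoly (p : MvPolynomial (Fin 2) ℝ) : Prop :=
  ∀ m ∈ p.support, 0 < m 1 → 0 < m 0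

namespace DescribableAux

/-- The single-variable polynomial in `c` obtained by substituting `k`. -/
noncomputable def q (p : MvPolynomial (Fin 2) ℝ) (k : ℕ) : Polynomial ℝ :=
  ∑ m ∈ p.support, Polynomial.C (coeff m p * (k : ℝ) ^ (m 0)) * Polynomial.X ^ (m 1)

/-- The polynomial in `k` giving the coefficient of `c^1`. -/
noncomputable def r (p : MvPolynomial (Fin 2) ℝ) : Polynomial ℝ :=
  ∑ m ∈ p.support.filter (fun m => m 1 = 1), Polynomial.C (coeff m p) * Polynomial.X ^ (m 0)

lemma eval_q (p : MvPolynomial (Fin 2) ℝ) (k c : ℕ) :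
    Polynomial.eval (c : ℝ) (q p k) = eval ![(k : ℝ), (c : ℝ)] p := by
  rw [MvPolynomial.eval_eq', q, Polynomial.eval_finset_sum]
  refine Finset.sum_congr rfl fun m _ => ?_
  simp [Fin.prod_univ_two, mul_assoc]

lemma coeff_one_q (p : MvPolynomial (Fin 2) ℝ) (k : ℕ) :
    (q p k).coeff 1 = Polynomial.eval (k : ℝ) (r p) := by
  rw [q, r, Polynomial.finset_sum_coeff, Polynomial.eval_finset_sum,
    Finset.sum_filter]
  refine Finset.sum_congr rfl fun m _ => ?_
  rw [Polynomial.coeff_C_mul, Polynomial.coeff_X_pow]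
  by_cases h : m 1 = 1
  · simp [h, mul_comm]
  · simp [h, Ne.symm h]

lemma coeff_zero_r (p : MvPolynomial (Fin 2) ℝ) (hp : GoodPoly p) :
    (r p).coeff 0 = 0 := by
  rw [r, Polynomial.finset_sum_coeff]
  refine Finset.sum_eq_zero fun m hm => ?_
  rw [Finset.mem_filter] at hm
  rw [Polynomial.coeff_C_mul, Polynomial.coeff_X_pow]
  have h0 : 0 < m 0 := hp m hm.1 (by omega)
  have : (0 : ℕ) ≠ m 0 := by omega
  simp [this]

/-- Infinite pigeonhole over a finite set of polynomials. -/
lemma pigeon {α : Type*} (F : Finset α) (P : α → ℕ → Prop)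
    (h : ∀ n : ℕ, ∃ p ∈ F, P p n) : ∃ p ∈ F, {n : ℕ | P p n}.Infinite := by
  by_contra hc
  push_neg at hc
  have hfin : (⋃ p ∈ (F : Set α), {n : ℕ | P p n}).Finite := by
    refine Set.Finite.biUnion F.finite_toSet fun p hp => ?_
    exact hc p hp
  have huniv : (Set.univ : Set ℕ) ⊆ ⋃ p ∈ (F : Set α), {n : ℕ | P p n} := by
    intro n _
    obtain ⟨p, hpF, hPn⟩ := h n
    exact Set.mem_biUnion hpF hPn
  exact Set.infinite_univ ((hfin.subset huniv))

/-- A polynomial bounded on an infinite set of naturals has degree ≤ 0. -/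
lemma degree_le_zero_of_bounded (s : Polynomial ℝ) (B : ℝ)
    (h : {n : ℕ | |Polynomial.eval (n : ℝ) s| ≤ B}.Infinite) : s.degree ≤ 0 := by
  by_contra hd
  push_neg at hd
  have ht := Polynomial.abs_tendsto_atTop s hd
  have hev : ∀ᶠ x in Filter.atTop, B < |Polynomial.eval x s| :=
    ht.eventually (Filter.eventually_gt_atTop B)
  obtain ⟨N, hN⟩ := Filter.eventually_atTop.mp hev
  obtain ⟨m, hm, hmlt⟩ := h.exists_gt ⌈N⌉₊
  have : N ≤ (m : ℝ) := le_trans (Nat.le_ceil N) (by exact_mod_cast hmlt.le)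
  exact absurd (hN _ this) (not_lt.mpr hm)

end DescribableAux

open DescribableAux in
/-- If `g : ℕ₊ × ℕ₊ → ℝ` is describable, i.e. weakly-described by a finite set of good
polynomials in `k, c`, then `g` does not uniformly approximate `(k, c) ↦ c`. -/
theorem describable_not_approx_c (g : ℕ → ℕ → ℝ) (F : Finset (MvPolynomial (Fin 2) ℝ))
    (hgood : ∀ p ∈ F, GoodPoly p)
    (hdesc : ∀ k c : ℕ, 0 < k → 0 < c →
      ∃ p ∈ F, eval ![(k : ℝ), (c : ℝ)] p = g k c) :
    ∀ ε : ℝ, 0 < ε → ∃ k c : ℕ, 0 < k ∧ 0 < c ∧ |g k c - (c : ℝ)| > ε := by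
  intro ε hε
  by_contra hcon
  push_neg at hcon
  -- For each k ≥ 1, find p ∈ F with (q p k).coeff 1 = 1.
  have key : ∀ k : ℕ, ∃ p ∈ F, (q p (k + 1)).coeff 1 = 1 := by
    intro k
    have step : ∀ n : ℕ, ∃ p ∈ F,
        |Polynomial.eval ((n + 1 : ℕ) : ℝ) (q p (k + 1)) - ((n + 1 : ℕ) : ℝ)| ≤ ε := by
      intro n
      obtain ⟨p, hpF, hpe⟩ := hdesc (k + 1) (n + 1) (Nat.succ_pos k) (Nat.succ_pos n)
      refine ⟨p, hpF, ?_⟩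
      rw [eval_q, hpe]
      exact hcon (k + 1) (n + 1) (Nat.succ_pos k) (Nat.succ_pos n)
    obtain ⟨p, hpF, hinf⟩ := pigeon F _ step
    refine ⟨p, hpF, ?_⟩
    -- the polynomial q p (k+1) - X is bounded on an infinite set of naturals
    set s := q p (k + 1) - Polynomial.X with hs
    have hinf' : {m : ℕ | |Polynomial.eval (m : ℝ) s| ≤ ε}.Infinite := by
      have hsub : (fun n => n + 1) '' {n : ℕ |
          |Polynomial.eval ((n + 1 : ℕ) : ℝ) (q p (k + 1)) - ((n + 1 : ℕ) : ℝ)| ≤ ε}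
          ⊆ {m : ℕ | |Polynomial.eval (m : ℝ) s| ≤ ε} := by
        rintro m ⟨n, hn, rfl⟩
        simpa [hs, Polynomial.eval_sub] using hn
      exact ((hinf.image (Set.injOn_of_injective (add_left_injective 1))).mono hsub)
    have hdeg := degree_le_zero_of_bounded s ε hinf'
    have h1 : s.coeff 1 = 0 :=
      Polynomial.coeff_eq_zero_of_degree_lt (lt_of_le_of_lt hdeg (by norm_num))
    have : (q p (k + 1)).coeff 1 - 1 = 0 := by
      simpa [hs, Polynomial.coeff_sub] using h1
    linarith
  -- Pigeonhole over k
  obtain ⟨p, hpF, hinf⟩ := pigeon F _ key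
  -- r p - 1 has infinitely many roots, hence r p = 1, but its constant coeff is 0.
  have hroots : {x : ℝ | (r p - 1).IsRoot x}.Infinite := by
    have hsub : (fun k : ℕ => ((k + 1 : ℕ) : ℝ)) '' {k : ℕ | (q p (k + 1)).coeff 1 = 1}
        ⊆ {x : ℝ | (r p - 1).IsRoot x} := by
      rintro x ⟨k, hk, rfl⟩
      have : Polynomial.eval ((k + 1 : ℕ) : ℝ) (r p) = 1 := by
        rw [← coeff_one_q]; exact hk
      push_cast at this ⊢
      simp [Polynomial.IsRoot, this]
    refine (hinf.image ?_).mono hsub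
    intro a _ b _ h
    simp only [Nat.cast_inj] at h
    omega
  have hzero : r p - 1 = 0 := Polynomial.eq_zero_of_infinite_isRoot _ hroots
  have hr1 : r p = 1 := by linear_combination hzero
  have h0 : (r p).coeff 0 = 0 := coeff_zero_r p (hgood p hpF)
  rw [hr1] at h0
  simp at h0
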